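/- G_k(2q+1) ≤ 2k·F_k(q): if A ⊆ ℤ/qℤ with A - A = ℤ/qℤ, then the lifted set A' = {n : -q < n ≤ q, n mod q ∈ A} satisfies: A' - A' contains 2q+1 consecutive integers and |kA'| ≤ 2k·|kA|. -/

import Mathlib

open Pointwise

theorem stmt_11 (k q : ℕ) (hk : 1 ≤ k) [NeZero q] (A : Finset (ZMod q))
    (hA : A - A = Finset.univ)
    (A' : Finset ℤ)
    (hA' : A' = (Finset.Ioc (-(q : ℤ)) q).filter (fun n : ℤ => ((n : ZMod q) ∈ A))) :
    Finset.Icc (-(q : ℤ)) q ⊆ A' - A' ∧ (k • A').card ≤ 2 * k * (k • A).card := by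
  have hq : 0 < (q : ℤ) := by exact_mod_cast Nat.pos_of_ne_zero (NeZero.ne q)
  have memA' : ∀ n : ℤ, n ∈ A' ↔ (-(q:ℤ) < n ∧ n ≤ q ∧ ((n : ZMod q) ∈ A)) := by
    intro n
    rw [hA']
    simp [Finset.mem_filter, Finset.mem_Ioc, and_assoc]
  constructor
  · intro m hm
    simp only [Finset.mem_Icc] at hm
    have hmem : ((m : ZMod q)) ∈ A - A := by rw [hA]; exact Finset.mem_univ _
    obtain ⟨x, hx, y, hy, hxy⟩ := Finset.mem_sub.mp hmem
    set b₀ : ℤ := if y.val = 0 then (q : ℤ) else (y.val : ℤ) with hb₀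
    have hrange : 1 ≤ b₀ ∧ b₀ ≤ q := by
      rcases eq_or_ne y.val 0 with h | h
      · simp [hb₀, h]; omega
      · have := ZMod.val_lt y
        simp only [hb₀, if_neg h]
        omega
    have hyv : ((y.val : ℕ) : ZMod q) = y := by rw [ZMod.natCast_val, ZMod.cast_id]
    have hcast : ((b₀ : ZMod q)) = y := by
      rcases eq_or_ne y.val 0 with h | h
      · simp only [hb₀, if_pos h]
        push_cast
        rw [ZMod.natCast_self, ← hyv, h]
        simp
      · simp only [hb₀, if_neg h]
        push_cast
        exact hyv
    have hmx : ((b₀ + m : ℤ) : ZMod q) = x := by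
      push_cast
      rw [hcast]
      have : ((m : ℤ) : ZMod q) = x - y := hxy.symm
      rw [this]; ring
    by_cases h : b₀ + m ≤ q
    · refine Finset.mem_sub.mpr ⟨b₀ + m, ?_, b₀, ?_, by ring⟩
      · rw [memA']
        refine ⟨by omega, h, by rw [hmx]; exact hx⟩
      · rw [memA']
        refine ⟨by omega, hrange.2, by rw [hcast]; exact hy⟩
    · refine Finset.mem_sub.mpr ⟨b₀ + m - q, ?_, b₀ - q, ?_, by ring⟩
      · rw [memA']
        refine ⟨by omega, by omega, ?_⟩
        have : ((b₀ + m - q : ℤ) : ZMod q) = x := by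
          push_cast
          push_cast at hmx
          simp [hmx]
        rw [this]; exact hx
      · rw [memA']
        refine ⟨by omega, by omega, ?_⟩
        have : ((b₀ - q : ℤ) : ZMod q) = y := by
          push_cast
          simp [hcast]
        rw [this]; exact hy
  · -- second part
    have key : ∀ j : ℕ, 1 ≤ j → ∀ n ∈ j • A',
        (-(j * q : ℤ) < n ∧ n ≤ j * q) ∧ ((n : ZMod q) ∈ j • A) := by
      intro j hj
      induction j, hj using Nat.le_induction with
      | base =>
        intro n hn
        rw [one_nsmul] at hn ⊢
        rw [memA'] at hn
        exact ⟨⟨by push_cast; omega, by push_cast; omega⟩, hn.2.2⟩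
      | succ j hj ih =>
        intro n hn
        rw [succ_nsmul] at hn
        obtain ⟨a, ha, b, hb, hab⟩ := Finset.mem_add.mp hn
        obtain ⟨⟨ha1, ha2⟩, ha3⟩ := ih a ha
        rw [memA'] at hb
        have hexp : ((j : ℤ) + 1) * (q : ℤ) = (j : ℤ) * q + q := by ring
        refine ⟨⟨by push_cast; linarith [ha1, hb.1], by push_cast; linarith [ha2, hb.2.1]⟩, ?_⟩
        rw [succ_nsmul]
        refine Finset.mem_add.mpr ⟨_, ha3, _, hb.2.2, ?_⟩
        rw [← hab]; push_cast; ring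
    set f : ℤ → ℕ × ZMod q := fun n => (((n + k * q - 1) / q).toNat, (n : ZMod q)) with hf
    have hmaps : ∀ n ∈ k • A', f n ∈ Finset.range (2 * k) ×ˢ (k • A) := by
      intro n hn
      obtain ⟨⟨h1, h2⟩, h3⟩ := key k hk n hn
      simp only [hf, Finset.mem_product, Finset.mem_range]
      refine ⟨?_, h3⟩
      rw [Int.toNat_lt' (by omega : 0 < 2 * k), Int.ediv_lt_iff_lt_mul hq]
      push_cast
      nlinarith [h1, h2, hq]
    have hinj : Set.InjOn f (k • A' : Finset ℤ) := by
      intro n hn n' hn' hfe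
      obtain ⟨⟨h1, h2⟩, h3⟩ := key k hk n hn
      obtain ⟨⟨h1', h2'⟩, h3'⟩ := key k hk n' hn'
      simp only [hf, Prod.mk.injEq] at hfe
      obtain ⟨hj, hc⟩ := hfe
      have hdivnn : 0 ≤ (n + k * q - 1) / q := Int.ediv_nonneg (by omega) (by omega)
      have hdivnn' : 0 ≤ (n' + k * q - 1) / q := Int.ediv_nonneg (by omega) (by omega)
      have hjeq : (n + k * q - 1) / q = (n' + k * q - 1) / q := by
        rw [← Int.toNat_of_nonneg hdivnn, ← Int.toNat_of_nonneg hdivnn', hj]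
      have e1 := Int.mul_ediv_add_emod (n + k * q - 1) q
      have e2 := Int.mul_ediv_add_emod (n' + k * q - 1) q
      have m1 : 0 ≤ (n + k * q - 1) % q := Int.emod_nonneg _ (by omega)
      have m2 : (n + k * q - 1) % q < q := Int.emod_lt_of_pos _ hq
      have m3 : 0 ≤ (n' + k * q - 1) % q := Int.emod_nonneg _ (by omega)
      have m4 : (n' + k * q - 1) % q < q := Int.emod_lt_of_pos _ hq
      have e3 : (q : ℤ) * ((n + k * q - 1) / q) = q * ((n' + k * q - 1) / q) := by
        rw [hjeq]
      have hwin : -(q : ℤ) < n - n' ∧ n - n' < q := by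
        constructor <;> linarith [e1, e2, e3, m1, m2, m3, m4]
      have hdvd : (q : ℤ) ∣ n - n' := by
        have hme : n ≡ n' [ZMOD (q : ℤ)] := (ZMod.intCast_eq_intCast_iff _ _ _).mp hc
        exact (Int.ModEq.dvd hme.symm)
      obtain ⟨c, hcc⟩ := hdvd
      have hc0 : c = 0 := by
        rcases lt_trichotomy c 0 with h | h | h
        · exfalso
          have hc1 : c ≤ -1 := by omega
          nlinarith [hwin.1, hq]
        · exact h
        · exfalso
          have hc1 : 1 ≤ c := by omega
          nlinarith [hwin.2, hq]
      rw [hc0, mul_zero] at hcc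
      omega
    calc (k • A').card ≤ (Finset.range (2 * k) ×ˢ (k • A)).card :=
          Finset.card_le_card_of_injOn f hmaps hinj
      _ = 2 * k * (k • A).card := by rw [Finset.card_product, Finset.card_range]
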